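/- Let q ≡ 3 (mod 4) be a prime power with q ≥ 7, and X_q the SL(2,q)-orbital digraph on Δ defined by the arc ([1,0],[0,1]). Then X_q has out-valency q and in-valency q; explicitly, the out-neighbourhood of [1,0] is {[a,1] : a ∈ F_q} and the in-neighbourhood of [0,1] is {[1,a] : a ∈ F_q}. -/

import Mathlib

set_option linter.unusedSectionVars false
namespace XqAux

variable {F : Type*} [Field F] [DecidableEq F]

def O (v : Fin 2 → F) : Set (Fin 2 → F) := {w | ∃ x : F, x ≠ 0 ∧ x ^ 2 • v = w}

def act (g : Matrix.SpecialLinearGroup (Fin 2) F) (S : Set (Fin 2 → F)) : Set (Fin 2 → F) :=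
  (fun v => Matrix.vecMul v (g : Matrix (Fin 2) (Fin 2) F)) '' S

def Arc (S T : Set (Fin 2 → F)) : Prop :=
  ∃ h : Matrix.SpecialLinearGroup (Fin 2) F, act h (O ![1, 0]) = S ∧ act h (O ![0, 1]) = T

lemma mem_O_self (v : Fin 2 → F) : v ∈ O v := ⟨1, one_ne_zero, by simp⟩

lemma O_smul_sq (x : F) (hx : x ≠ 0) (v : Fin 2 → F) : O (x ^ 2 • v) = O v := by
  ext w
  constructor
  · rintro ⟨y, hy, rfl⟩
    exact ⟨y * x, mul_ne_zero hy hx, by rw [smul_smul, ← mul_pow]⟩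
  · rintro ⟨y, hy, rfl⟩
    refine ⟨y / x, div_ne_zero hy hx, ?_⟩
    rw [smul_smul, div_pow, div_mul_cancel₀]
    exact pow_ne_zero _ hx

lemma O_eq_iff {v w : Fin 2 → F} (h : O v = O w) : ∃ x : F, x ≠ 0 ∧ x ^ 2 • w = v := by
  have := mem_O_self v
  rw [h] at this
  exact this

lemma act_O (g : Matrix.SpecialLinearGroup (Fin 2) F) (v : Fin 2 → F) :
    act g (O v) = O (Matrix.vecMul v (g : Matrix (Fin 2) (Fin 2) F)) := by
  ext w
  simp only [act, O, Set.mem_image, Set.mem_setOf_eq]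
  constructor
  · rintro ⟨u, ⟨x, hx, rfl⟩, rfl⟩
    exact ⟨x, hx, by rw [Matrix.smul_vecMul]⟩
  · rintro ⟨x, hx, rfl⟩
    exact ⟨x ^ 2 • v, ⟨x, hx, rfl⟩, by rw [Matrix.smul_vecMul]⟩

lemma act_act (g h : Matrix.SpecialLinearGroup (Fin 2) F) (S : Set (Fin 2 → F)) :
    act g (act h S) = act (h * g) S := by
  simp [act, Set.image_image, Matrix.vecMul_vecMul]

lemma act_one (S : Set (Fin 2 → F)) : act 1 S = S := by
  simp [act]

lemma vecMul_e1 (M : Matrix (Fin 2) (Fin 2) F) :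
    Matrix.vecMul ![1, 0] M = fun j => M 0 j := by
  funext j
  simp [Matrix.vecMul, dotProduct, Fin.sum_univ_two]

lemma vecMul_e2 (M : Matrix (Fin 2) (Fin 2) F) :
    Matrix.vecMul ![0, 1] M = fun j => M 1 j := by
  funext j
  simp [Matrix.vecMul, dotProduct, Fin.sum_univ_two]


lemma smul_pair (x a b : F) : x • (![a, b] : Fin 2 → F) = ![x * a, x * b] := by
  funext j
  fin_cases j <;> simp

lemma out_nbhd : {T : Set (Fin 2 → F) | Arc (O ![1, 0]) T} = {T | ∃ a : F, T = O ![a, 1]} := by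
  ext T
  simp only [Set.mem_setOf_eq, Arc]
  constructor
  · rintro ⟨h, h1, h2⟩
    rw [act_O] at h1 h2
    obtain ⟨x, hx, hxe⟩ := O_eq_iff h1.symm
    set M : Matrix (Fin 2) (Fin 2) F := (h : Matrix (Fin 2) (Fin 2) F) with hM
    have h00 : x ^ 2 * M 0 0 = 1 := by
      have := congrFun hxe 0
      simpa [Matrix.vecMul, dotProduct, Fin.sum_univ_two] using this
    have h01 : M 0 1 = 0 := by
      have := congrFun hxe 1
      have h' : x ^ 2 * M 0 1 = 0 := by
        simpa [Matrix.vecMul, dotProduct, Fin.sum_univ_two] using this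
      have hx2 : x ^ 2 ≠ 0 := pow_ne_zero _ hx
      exact (mul_eq_zero.mp h').resolve_left hx2
    have hdet : M.det = 1 := h.prop
    rw [Matrix.det_fin_two, h01] at hdet
    have h11 : M 1 1 = x ^ 2 := by
      rw [sub_eq_iff_eq_add] at hdet
      linear_combination x ^ 2 * hdet - M 1 1 * h00
    refine ⟨M 1 0 / x ^ 2, ?_⟩
    rw [← h2, vecMul_e2, ← O_smul_sq x hx ![M 1 0 / x ^ 2, 1]]
    have hveq : (fun j => M 1 j) = x ^ 2 • (![M 1 0 / x ^ 2, 1] : Fin 2 → F) := by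
      funext j
      have hx2 : x ^ 2 ≠ 0 := pow_ne_zero _ hx
      fin_cases j <;> simp [h11] <;> field_simp
    rw [hveq]
  · rintro ⟨a, rfl⟩
    refine ⟨⟨!![1, 0; a, 1], by simp [Matrix.det_fin_two_of]⟩, ?_, ?_⟩ <;> erw [act_O]
    · have : Matrix.vecMul ![1, 0] (!![1, 0; a, 1] : Matrix (Fin 2) (Fin 2) F) = ![1, 0] := by
        funext j
        fin_cases j <;> simp [Matrix.vecMul, dotProduct, Fin.sum_univ_two]
      rw [this]
    · have : Matrix.vecMul ![0, 1] (!![1, 0; a, 1] : Matrix (Fin 2) (Fin 2) F) = ![a, 1] := by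
        funext j
        fin_cases j <;> simp [Matrix.vecMul, dotProduct, Fin.sum_univ_two]
      rw [this]

lemma in_nbhd : {S : Set (Fin 2 → F) | Arc S (O ![0, 1])} = {S | ∃ a : F, S = O ![1, a]} := by
  ext S
  simp only [Set.mem_setOf_eq, Arc]
  constructor
  · rintro ⟨h, h1, h2⟩
    rw [act_O] at h1 h2
    obtain ⟨x, hx, hxe⟩ := O_eq_iff h2.symm
    set M : Matrix (Fin 2) (Fin 2) F := (h : Matrix (Fin 2) (Fin 2) F) with hM
    have hx2 : x ^ 2 ≠ 0 := pow_ne_zero _ hx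
    have h11 : x ^ 2 * M 1 1 = 1 := by
      have := congrFun hxe 1
      simpa [Matrix.vecMul, dotProduct, Fin.sum_univ_two] using this
    have h10 : M 1 0 = 0 := by
      have := congrFun hxe 0
      have h' : x ^ 2 * M 1 0 = 0 := by
        simpa [Matrix.vecMul, dotProduct, Fin.sum_univ_two] using this
      exact (mul_eq_zero.mp h').resolve_left hx2
    have hdet : M.det = 1 := h.prop
    rw [Matrix.det_fin_two, h10] at hdet
    have h00 : M 0 0 = x ^ 2 := by
      rw [sub_eq_iff_eq_add] at hdet
      linear_combination x ^ 2 * hdet - M 0 0 * h11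
    refine ⟨M 0 1 / x ^ 2, ?_⟩
    rw [← h1, vecMul_e1, ← O_smul_sq x hx ![1, M 0 1 / x ^ 2]]
    have hveq : (fun j => M 0 j) = x ^ 2 • (![1, M 0 1 / x ^ 2] : Fin 2 → F) := by
      funext j
      fin_cases j <;> simp [h00] <;> field_simp
    rw [hveq]
  · rintro ⟨a, rfl⟩
    refine ⟨⟨!![1, a; 0, 1], by simp [Matrix.det_fin_two_of]⟩, ?_, ?_⟩ <;> erw [act_O]
    · have : Matrix.vecMul ![1, 0] (!![1, a; 0, 1] : Matrix (Fin 2) (Fin 2) F) = ![1, a] := by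
        funext j
        fin_cases j <;> simp [Matrix.vecMul, dotProduct, Fin.sum_univ_two]
      rw [this]
    · have : Matrix.vecMul ![0, 1] (!![1, a; 0, 1] : Matrix (Fin 2) (Fin 2) F) = ![0, 1] := by
        funext j
        fin_cases j <;> simp [Matrix.vecMul, dotProduct, Fin.sum_univ_two]
      rw [this]

lemma inj_out : Function.Injective (fun a : F => O ![a, 1]) := by
  intro a b hab
  obtain ⟨x, hx, hxe⟩ := O_eq_iff hab
  have h1 : x ^ 2 * 1 = 1 := by
    have := congrFun hxe 1
    simpa using this
  have h0 : x ^ 2 * b = a := by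
    have := congrFun hxe 0
    simpa using this
  rw [mul_one] at h1
  rw [h1, one_mul] at h0
  exact h0.symm

lemma inj_in : Function.Injective (fun a : F => O ![1, a]) := by
  intro a b hab
  obtain ⟨x, hx, hxe⟩ := O_eq_iff hab
  have h1 : x ^ 2 * 1 = 1 := by
    have := congrFun hxe 0
    simpa using this
  have h0 : x ^ 2 * b = a := by
    have := congrFun hxe 1
    simpa using this
  rw [mul_one] at h1
  rw [h1, one_mul] at h0
  exact h0.symm

lemma exists_row0 (v : Fin 2 → F) (hv : v ≠ 0) :
    ∃ g : Matrix.SpecialLinearGroup (Fin 2) F,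
      Matrix.vecMul ![1, 0] (g : Matrix (Fin 2) (Fin 2) F) = v := by
  by_cases h0 : v 0 = 0
  · have h1 : v 1 ≠ 0 := by
      intro h1
      apply hv
      funext j
      fin_cases j <;> simp [h0, h1]
    refine ⟨⟨!![0, v 1; -(v 1)⁻¹, 0], by
      simp [Matrix.det_fin_two_of, mul_inv_cancel₀ h1]⟩, ?_⟩
    rw [vecMul_e1]
    funext j
    fin_cases j <;> simp [h0]
  · refine ⟨⟨!![v 0, v 1; 0, (v 0)⁻¹], by
      simp [Matrix.det_fin_two_of, mul_inv_cancel₀ h0]⟩, ?_⟩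
    rw [vecMul_e1]
    funext j
    fin_cases j <;> simp

lemma exists_row1 (v : Fin 2 → F) (hv : v ≠ 0) :
    ∃ g : Matrix.SpecialLinearGroup (Fin 2) F,
      Matrix.vecMul ![0, 1] (g : Matrix (Fin 2) (Fin 2) F) = v := by
  obtain ⟨g, hg⟩ := exists_row0 v hv
  have hσdet : (!![0, -1; 1, 0] : Matrix (Fin 2) (Fin 2) F).det = 1 := by
    simp [Matrix.det_fin_two_of]
  set σ : Matrix.SpecialLinearGroup (Fin 2) F := ⟨!![0, -1; 1, 0], hσdet⟩ with hσ
  refine ⟨σ * g, ?_⟩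
  rw [Matrix.SpecialLinearGroup.coe_mul, ← Matrix.vecMul_vecMul, ← hg]
  congr 1
  funext j
  fin_cases j <;> simp [Matrix.vecMul, dotProduct, Fin.sum_univ_two, hσ]

lemma act_injective (g : Matrix.SpecialLinearGroup (Fin 2) F) :
    Function.Injective (act g) := by
  have : Function.LeftInverse (act g⁻¹) (act g) := by
    intro S
    rw [act_act, mul_inv_cancel, act_one]
  exact this.injective

lemma arc_act {S T : Set (Fin 2 → F)} (g : Matrix.SpecialLinearGroup (Fin 2) F)
    (h : Arc S T) : Arc (act g S) (act g T) := by
  obtain ⟨h', h1, h2⟩ := h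
  exact ⟨h' * g, by rw [← act_act, h1], by rw [← act_act, h2]⟩

lemma out_image (g : Matrix.SpecialLinearGroup (Fin 2) F) (S₀ : Set (Fin 2 → F)) :
    {T | Arc (act g S₀) T} = act g '' {T | Arc S₀ T} := by
  ext T
  simp only [Set.mem_setOf_eq, Set.mem_image]
  constructor
  · intro hA
    refine ⟨act g⁻¹ T, ?_, by rw [act_act, inv_mul_cancel, act_one]⟩
    have := arc_act g⁻¹ hA
    rwa [act_act, mul_inv_cancel, act_one] at this
  · rintro ⟨T', hT', rfl⟩
    exact arc_act g hT'

lemma in_image (g : Matrix.SpecialLinearGroup (Fin 2) F) (T₀ : Set (Fin 2 → F)) :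
    {S | Arc S (act g T₀)} = act g '' {S | Arc S T₀} := by
  ext S
  simp only [Set.mem_setOf_eq, Set.mem_image]
  constructor
  · intro hA
    refine ⟨act g⁻¹ S, ?_, by rw [act_act, inv_mul_cancel, act_one]⟩
    have := arc_act g⁻¹ hA
    rwa [act_act, mul_inv_cancel, act_one] at this
  · rintro ⟨S', hS', rfl⟩
    exact arc_act g hS'

lemma ncard_out [Fintype F] : Set.ncard {T : Set (Fin 2 → F) | Arc (O ![1, 0]) T} = Fintype.card F := by
  rw [out_nbhd]
  have : {T : Set (Fin 2 → F) | ∃ a : F, T = O ![a, 1]} = Set.range (fun a : F => O ![a, 1]) := by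
    ext T
    simp [Set.range, eq_comm]
  rw [this, ← Set.image_univ, Set.ncard_image_of_injective _ inj_out, Set.ncard_univ,
    Nat.card_eq_fintype_card]

lemma ncard_in [Fintype F] : Set.ncard {S : Set (Fin 2 → F) | Arc S (O ![0, 1])} = Fintype.card F := by
  rw [in_nbhd]
  have : {S : Set (Fin 2 → F) | ∃ a : F, S = O ![1, a]} = Set.range (fun a : F => O ![1, a]) := by
    ext S
    simp [Set.range, eq_comm]
  rw [this, ← Set.image_univ, Set.ncard_image_of_injective _ inj_in, Set.ncard_univ,
    Nat.card_eq_fintype_card]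

end XqAux

/-- For `q ≡ 3 (mod 4)`, `q ≥ 7`, the orbital digraph `X_q` has in- and out-valency `q`;
explicitly the out-neighbourhood of `[1,0]` is `{[a,1] : a ∈ F_q}` and the
in-neighbourhood of `[0,1]` is `{[1,a] : a ∈ F_q}`. -/
theorem Xq_valency (F : Type*) [Field F] [Fintype F] [DecidableEq F]
    (hq : Fintype.card F % 4 = 3) (hq7 : 7 ≤ Fintype.card F) :
    let O : (Fin 2 → F) → Set (Fin 2 → F) := fun v => {w | ∃ x : F, x ≠ 0 ∧ x ^ 2 • v = w}
    let Δ : Set (Set (Fin 2 → F)) := {S | ∃ v : Fin 2 → F, v ≠ 0 ∧ S = O v}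
    let act : Matrix.SpecialLinearGroup (Fin 2) F → Set (Fin 2 → F) → Set (Fin 2 → F) :=
      fun g S => (fun v => Matrix.vecMul v (g : Matrix (Fin 2) (Fin 2) F)) '' S
    let Arc : Set (Fin 2 → F) → Set (Fin 2 → F) → Prop :=
      fun S T => ∃ h : Matrix.SpecialLinearGroup (Fin 2) F,
        act h (O ![1, 0]) = S ∧ act h (O ![0, 1]) = T
    ({T | Arc (O ![1, 0]) T} = {T | ∃ a : F, T = O ![a, 1]}) ∧
    ({S | Arc S (O ![0, 1])} = {S | ∃ a : F, S = O ![1, a]}) ∧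
    (∀ S ∈ Δ, Set.ncard {T | Arc S T} = Fintype.card F ∧
      Set.ncard {T | Arc T S} = Fintype.card F) := by

  intro O Δ act Arc
  refine ⟨XqAux.out_nbhd, XqAux.in_nbhd, ?_⟩
  rintro S ⟨v, hv, rfl⟩
  constructor
  · obtain ⟨g, hg⟩ := XqAux.exists_row0 v hv
    have hS : XqAux.act g (XqAux.O ![1, 0]) = XqAux.O v := by
      rw [XqAux.act_O, hg]
    have himg : {T | XqAux.Arc (XqAux.O v) T}
        = XqAux.act g '' {T | XqAux.Arc (XqAux.O ![1, 0]) T} := by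
      rw [← hS, XqAux.out_image]
    show Set.ncard {T | XqAux.Arc (XqAux.O v) T} = Fintype.card F
    rw [himg, Set.ncard_image_of_injective _ (XqAux.act_injective g), XqAux.ncard_out]
  · obtain ⟨g, hg⟩ := XqAux.exists_row1 v hv
    have hS : XqAux.act g (XqAux.O ![0, 1]) = XqAux.O v := by
      rw [XqAux.act_O, hg]
    have himg : {T | XqAux.Arc T (XqAux.O v)}
        = XqAux.act g '' {T | XqAux.Arc T (XqAux.O ![0, 1])} := by
      rw [← hS, XqAux.in_image]
    show Set.ncard {T | XqAux.Arc T (XqAux.O v)} = Fintype.card F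
    rw [himg, Set.ncard_image_of_injective _ (XqAux.act_injective g), XqAux.ncard_in]
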